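/- Every accepting end component of a product MDP contains an accepting simple end component (i.e., an accepting end component in which each state has exactly one enabled action). -/

import Mathlib

open Relation

/-- An end component of a finite MDP with transition probabilities `Δ`:
a nonempty set of states `T` with nonempty enabled action sets `act v` for `v ∈ T`,
closed under transitions, and strongly connected. -/
def IsEC {V A : Type*} [Fintype V] [DecidableEq V]
    (Δ : V → A → V → ℝ) (T : Finset V) (act : V → Finset A) : Prop :=
  T.Nonempty ∧ (∀ v ∈ T, (act v).Nonempty) ∧
    (∀ v ∈ T, ∀ a ∈ act v, ∑ v' ∈ T, Δ v a v' = 1) ∧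
    (∀ v ∈ T, ∀ w ∈ T,
      Relation.ReflTransGen
        (fun x y => x ∈ T ∧ y ∈ T ∧ ∃ a ∈ act x, 0 < Δ x a y) v w)

/-- An end component is accepting for a Rabin condition `F` if for some pair
`(Acc, Rej) ∈ F` it meets `Acc` and avoids `Rej`. -/
def IsAccepting {V : Type*} [DecidableEq V]
    (F : Finset (Finset V × Finset V)) (T : Finset V) : Prop :=
  ∃ p ∈ F, (T ∩ p.1).Nonempty ∧ T ∩ p.2 = ∅

/-- Every accepting end component contains an accepting *simple* end component,
i.e. one in which each state has exactly one enabled action. -/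
theorem stmt_6 {V A : Type*} [Fintype V] [Fintype A] [DecidableEq V] [DecidableEq A]
    (Δ : V → A → V → ℝ) (hΔnonneg : ∀ v a v', 0 ≤ Δ v a v')
    (hΔsum : ∀ v a, ∑ v' : V, Δ v a v' = 1)
    (F : Finset (Finset V × Finset V))
    (T : Finset V) (act : V → Finset A)
    (hEC : IsEC Δ T act) (hAcc : IsAccepting F T) :
    ∃ (T' : Finset V) (act' : V → Finset A),
      T' ⊆ T ∧ (∀ v ∈ T', act' v ⊆ act v) ∧
      IsEC Δ T' act' ∧ IsAccepting F T' ∧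
      ∀ v ∈ T', (act' v).card = 1 := by
  classical
  obtain ⟨hTne, hactne, hsum, hconn⟩ := hEC
  obtain ⟨p, hpF, ⟨t, ht⟩, hRej⟩ := hAcc
  rw [Finset.mem_inter] at ht
  obtain ⟨htT, htA⟩ := ht
  -- transitions from T stay in T
  have hclose : ∀ x ∈ T, ∀ a ∈ act x, ∀ y, 0 < Δ x a y → y ∈ T := by
    intro x hx a ha y hy
    by_contra hyT
    have h1 := hsum x hx a ha
    have h2 := hΔsum x a
    have hsd := Finset.sum_sdiff (Finset.subset_univ T) (f := fun v' => Δ x a v')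
    have h3 : ∑ v' ∈ Finset.univ \ T, Δ x a v' = 0 := by linarith
    have h4 : Δ x a y = 0 :=
      (Finset.sum_eq_zero_iff_of_nonneg (fun i _ => hΔnonneg x a i)).mp h3 y
        (Finset.mem_sdiff.mpr ⟨Finset.mem_univ y, hyT⟩)
    linarith
  -- crossing lemma: from outside D one can step into D
  have cross : ∀ (D : Finset V), t ∈ D → ¬ T ⊆ D →
      ∃ x a, x ∈ T ∧ x ∉ D ∧ a ∈ act x ∧ ∃ y ∈ D, 0 < Δ x a y := by
    intro D htD hTD
    obtain ⟨z, hzT, hzD⟩ := Finset.not_subset.mp hTD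
    have hpath := hconn z hzT t htT
    have main : z ∈ D ∨ ∃ x a, x ∈ T ∧ x ∉ D ∧ a ∈ act x ∧ ∃ y ∈ D, 0 < Δ x a y := by
      refine Relation.ReflTransGen.head_induction_on hpath (Or.inl htD) ?_
      rintro u c ⟨huT, hcT, a, ha, hΔpos⟩ _ ih
      rcases ih with hcD | hx
      · by_cases huD : u ∈ D
        · exact Or.inl huD
        · exact Or.inr ⟨u, a, huT, huD, ha, c, hcD, hΔpos⟩
      · exact Or.inr hx
    rcases main with h | h
    · exact absurd h hzD
    · exact h
  -- build σ : every state of T reaches t under the single chosen actions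
  have key : ∀ n (D : Finset V), t ∈ D → D ⊆ T →
      (∃ σ : V → A, (∀ x ∈ D, σ x ∈ act x) ∧
        ∀ x ∈ D, ReflTransGen (fun p q => p ∈ D ∧ q ∈ D ∧ 0 < Δ p (σ p) q) x t) →
      (T \ D).card ≤ n →
      ∃ σ : V → A, (∀ x ∈ T, σ x ∈ act x) ∧
        ∀ x ∈ T, ReflTransGen (fun p q => p ∈ T ∧ q ∈ T ∧ 0 < Δ p (σ p) q) x t := by
    intro n
    induction n with
    | zero =>
      intro D htD hDT hG hcard
      have hempty : T \ D = ∅ := Finset.card_eq_zero.mp (Nat.le_zero.mp hcard)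
      have hTD : T = D := by
        apply Finset.Subset.antisymm _ hDT
        intro x hx
        by_contra hxD
        have : x ∈ T \ D := Finset.mem_sdiff.mpr ⟨hx, hxD⟩
        rw [hempty] at this
        exact absurd this (Finset.notMem_empty x)
      rw [hTD]; exact hG
    | succ n ih =>
      intro D htD hDT hG hcard
      by_cases hTsub : T ⊆ D
      · have hTD : T = D := Finset.Subset.antisymm hTsub hDT
        rw [hTD]; exact hG
      · obtain ⟨σ, hσact, hσreach⟩ := hG
        obtain ⟨x, a, hxT, hxD, ha, y, hyD, hΔpos⟩ := cross D htD hTsub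
        set σ' := Function.update σ x a with hσ'
        have hσ'x : σ' x = a := Function.update_self x a σ
        have hσ'of : ∀ z, z ≠ x → σ' z = σ z := fun z hz => Function.update_of_ne hz a σ
        refine ih (insert x D) (Finset.mem_insert_of_mem htD)
          (Finset.insert_subset hxT hDT) ⟨σ', ?_, ?_⟩ ?_
        · intro z hz
          rcases Finset.mem_insert.mp hz with rfl | hzD
          · rw [hσ'x]; exact ha
          · rw [hσ'of z (fun h => hxD (h ▸ hzD))]; exact hσact z hzD
        · -- reachability in insert x D
          have mono : ∀ u v, (fun p q => p ∈ D ∧ q ∈ D ∧ 0 < Δ p (σ p) q) u v →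
              (fun p q => p ∈ insert x D ∧ q ∈ insert x D ∧ 0 < Δ p (σ' p) q) u v := by
            rintro u v ⟨huD, hvD, hpos⟩
            refine ⟨Finset.mem_insert_of_mem huD, Finset.mem_insert_of_mem hvD, ?_⟩
            rw [hσ'of u (fun h => hxD (h ▸ huD))]
            exact hpos
          intro z hz
          rcases Finset.mem_insert.mp hz with rfl | hzD
          · refine Relation.ReflTransGen.head
              ⟨Finset.mem_insert_self z D, Finset.mem_insert_of_mem hyD, by rw [hσ'x]; exact hΔpos⟩ ?_
            exact Relation.ReflTransGen.mono mono _ _ (hσreach y hyD)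
          · exact Relation.ReflTransGen.mono mono _ _ (hσreach z hzD)
        · have : T \ insert x D = (T \ D).erase x := by
            ext u
            simp only [Finset.mem_sdiff, Finset.mem_insert, Finset.mem_erase, not_or]
            tauto
          rw [this, Finset.card_erase_of_mem (Finset.mem_sdiff.mpr ⟨hxT, hxD⟩)]
          omega
  -- base case for key: D = {t}
  obtain ⟨a₀, ha₀⟩ := hactne t htT
  obtain ⟨σ, hσact, hσreach⟩ :=
    key (T \ {t}).card {t} (Finset.mem_singleton_self t)
      (Finset.singleton_subset_iff.mpr htT)
      ⟨fun _ => a₀, fun x hx => by rw [Finset.mem_singleton.mp hx]; exact ha₀,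
        fun x hx => by rw [Finset.mem_singleton.mp hx]⟩ le_rfl
  -- the simple EC: states reachable from t under σ
  set R : V → V → Prop := fun p q => p ∈ T ∧ q ∈ T ∧ 0 < Δ p (σ p) q with hR
  set B : Finset V := T.filter (fun y => ReflTransGen R t y) with hB
  have hBsub : B ⊆ T := Finset.filter_subset _ _
  have htB : t ∈ B := Finset.mem_filter.mpr ⟨htT, ReflTransGen.refl⟩
  -- B absorbs R-steps
  have habsorb : ∀ u v, u ∈ B → R u v → v ∈ B := by
    rintro u v hu ⟨huT, hvT, hpos⟩
    rcases Finset.mem_filter.mp hu with ⟨_, hreach⟩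
    exact Finset.mem_filter.mpr ⟨hvT, hreach.tail ⟨huT, hvT, hpos⟩⟩
  -- paths from a B-state stay in B, and lift to the B-relation
  have hlift : ∀ u v, ReflTransGen R u v → u ∈ B →
      v ∈ B ∧ ReflTransGen
        (fun p q => p ∈ B ∧ q ∈ B ∧ ∃ a ∈ ({σ p} : Finset A), 0 < Δ p a q) u v := by
    intro u v h
    induction h with
    | refl => exact fun hu => ⟨hu, ReflTransGen.refl⟩
    | tail hste hstep ih =>
      intro hu
      obtain ⟨hmB, hpath⟩ := ih hu
      have hvB := habsorb _ _ hmB hstep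
      exact ⟨hvB, hpath.tail ⟨hmB, hvB, σ _, Finset.mem_singleton_self _,
        hstep.2.2⟩⟩
  refine ⟨B, fun x => {σ x}, hBsub, ?_, ⟨⟨t, htB⟩, ?_, ?_, ?_⟩, ?_, ?_⟩
  · intro v hv
    exact Finset.singleton_subset_iff.mpr (hσact v (hBsub hv))
  · intro v _; exact ⟨σ v, Finset.mem_singleton_self _⟩
  · -- sums over B are 1
    intro v hv a ha
    rw [Finset.mem_singleton.mp ha]
    have hvT := hBsub hv
    have hσv := hσact v hvT
    have hTsum := hsum v hvT (σ v) hσv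
    rw [← hTsum]
    apply Finset.sum_subset hBsub
    intro y hyT hyB
    by_contra hne
    have hpos : 0 < Δ v (σ v) y :=
      lt_of_le_of_ne (hΔnonneg v (σ v) y) (fun h => hne h.symm)
    exact hyB (habsorb v y hv ⟨hvT, hyT, hpos⟩)
  · -- strong connectivity of B
    intro v hv w hw
    have h1 : ReflTransGen R v t := hσreach v (hBsub hv)
    have h2 : ReflTransGen R t w := (Finset.mem_filter.mp hw).2
    have p1 := (hlift v t h1 hv).2
    have p2 := (hlift t w h2 htB).2
    exact p1.trans p2
  · -- accepting
    refine ⟨p, hpF, ⟨t, Finset.mem_inter.mpr ⟨htB, htA⟩⟩, ?_⟩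
    have : B ∩ p.2 ⊆ T ∩ p.2 := Finset.inter_subset_inter hBsub (le_refl p.2)
    rw [hRej] at this
    exact Finset.subset_empty.mp this
  · intro v _; exact Finset.card_singleton _
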